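/- For every positive integer n, the fugacity partition function of staircase tableaux at α = β = γ = δ = 1 and q = 1 equals Z_n(y; 1, 1, 1, 1; 1) = 2^n · (y+1)^n · n!, as an identity in the polynomial ring ℤ[y]. -/

import Mathlib

inductive SLetter : Type
  | A | B | G | D
deriving DecidableEq, Repr

instance instFintypeSLetter : Fintype SLetter :=
  ⟨{SLetter.A, SLetter.B, SLetter.G, SLetter.D}, fun x => by cases x <;> simp⟩

/-- A filling `T` of the staircase Young diagram of shape `(n, n-1, …, 1)`
(boxes `(i,j)` with `i + j < n`, row `i` from the top, column `j` from the left,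
diagonal boxes those with `i + j + 1 = n`) is a staircase tableau if:
boxes outside the shape are unused (empty); no diagonal box is empty;
all boxes to the left of a `β` or `δ` in its row are empty;
all boxes above an `α` or `γ` in its column are empty. -/
def IsStaircase (n : ℕ) (T : Fin n → Fin n → Option SLetter) : Prop :=
  (∀ i j : Fin n, n ≤ (i : ℕ) + (j : ℕ) → T i j = none) ∧
  (∀ i j : Fin n, (i : ℕ) + (j : ℕ) + 1 = n → T i j ≠ none) ∧
  (∀ i j j' : Fin n, j' < j → (T i j = some SLetter.B ∨ T i j = some SLetter.D) →
      T i j' = none) ∧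
  (∀ i i' j : Fin n, i' < i → (T i j = some SLetter.A ∨ T i j = some SLetter.G) →
      T i' j = none)

instance (n : ℕ) : DecidablePred (IsStaircase n) := fun T => by
  unfold IsStaircase; infer_instance

/-- The staircase tableaux of size `n`. -/
def StaircaseTableau (n : ℕ) : Type :=
  {T : Fin n → Fin n → Option SLetter // IsStaircase n T}

instance (n : ℕ) : Fintype (StaircaseTableau n) := Subtype.fintype _

instance (n : ℕ) : DecidableEq (StaircaseTableau n) := Subtype.instDecidableEq

/-- The number of boxes of `T` filled with the symbol `x`. -/
def countLetter (n : ℕ) (T : Fin n → Fin n → Option SLetter) (x : SLetter) : ℕ :=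
  (Finset.univ.filter (fun p : Fin n × Fin n => T p.1 p.2 = some x)).card

/-- The label of the nearest labeled box strictly to the right of `(i,j)` in row `i`. -/
def rightLabel (n : ℕ) (T : Fin n → Fin n → Option SLetter) (i j : Fin n) : Option SLetter :=
  List.findSome? (fun j' => T i j') ((List.finRange n).drop ((j : ℕ) + 1))

/-- The label of the nearest labeled box strictly below `(i,j)` in column `j`. -/
def belowLabel (n : ℕ) (T : Fin n → Fin n → Option SLetter) (i j : Fin n) : Option SLetter :=
  List.findSome? (fun i' => T i' j) ((List.finRange n).drop ((i : ℕ) + 1))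

/-- Whether the (empty) box `(i,j)` receives a `q` in the weight of `T`:
an empty box seeing a `δ` to its right gets `q`; an empty box seeing an `α` or `γ` to
its right and a `β` or `γ` below it gets `q`; all other (empty) boxes get `1`. -/
def boxQ (n : ℕ) (T : Fin n → Fin n → Option SLetter) (i j : Fin n) : Bool :=
  match T i j with
  | some _ => false
  | none =>
    match rightLabel n T i j, belowLabel n T i j with
    | some SLetter.D, _ => true
    | some SLetter.A, some SLetter.B => true
    | some SLetter.A, some SLetter.G => true
    | some SLetter.G, some SLetter.B => true
    | some SLetter.G, some SLetter.G => true
    | _, _ => false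

/-- The exponent of `q` in the weight of `T`. -/
def qCount (n : ℕ) (T : Fin n → Fin n → Option SLetter) : ℕ :=
  (Finset.univ.filter (fun p : Fin n × Fin n => boxQ n T p.1 p.2 = true)).card

/-- The type of `T`, as a word in `Fin n → Bool`, read off the diagonal boxes from
northeast (index `0`) to southwest (index `n-1`): `true` (a `•`) for each `α` or `δ`,
`false` (a `∘`) for each `β` or `γ`. -/
def typeWord (n : ℕ) (T : Fin n → Fin n → Option SLetter) : Fin n → Bool := fun i =>
  match T i ⟨n - 1 - (i : ℕ), by have := i.isLt; omega⟩ with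
  | some SLetter.A => true
  | some SLetter.D => true
  | _ => false

/-- `t(T)`, the number of `•`'s in the type of `T`. -/
def bulletCount (n : ℕ) (T : Fin n → Fin n → Option SLetter) : ℕ :=
  (Finset.univ.filter (fun i : Fin n => typeWord n T i = true)).card

/-- The weight of a staircase tableau: the product of all its labels, with each empty
box contributing `q` or `1` according to the rules (`u` is set to `1`). -/
def stWt {R : Type*} [CommSemiring R] (n : ℕ) (a b g d q : R)
    (T : Fin n → Fin n → Option SLetter) : R :=
  a ^ countLetter n T SLetter.A * b ^ countLetter n T SLetter.B *
    g ^ countLetter n T SLetter.G * d ^ countLetter n T SLetter.D * q ^ qCount n T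

/-- The fugacity partition function `Z_n(y; α, β, γ, δ; q) = Σ_T wt(T) y^{t(T)}`,
summed over all staircase tableaux of size `n`. -/
def stZ (R : Type*) [CommSemiring R] (n : ℕ) (y a b g d q : R) : R :=
  ∑ T : StaircaseTableau n, stWt n a b g d q T.val * y ^ bulletCount n T.val

/-- The generating polynomial `Z_σ(α, β, γ, δ; q)` of staircase tableaux of a given
type `σ` (encoded as a list of booleans, `true` = `•`, `false` = `∘`). -/
def stZw (R : Type*) [CommSemiring R] (w : List Bool) (a b g d q : R) : R :=
  ∑ T ∈ Finset.univ.filter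
      (fun T : StaircaseTableau w.length => List.ofFn (typeWord w.length T.val) = w),
    stWt w.length a b g d q T.val


section SPAux

open Finset

/-- `true` for a diagonal label contributing a bullet. -/
def typeBool : Option SLetter → Bool
  | some SLetter.A => true
  | some SLetter.D => true
  | _ => false

lemma typeWord_def (n : ℕ) (T : Fin n → Fin n → Option SLetter) (i : Fin n) :
    typeWord n T i = typeBool (T i ⟨n - 1 - (i : ℕ), by have := i.isLt; omega⟩) := by
  unfold typeWord typeBool
  cases T i ⟨n - 1 - (i : ℕ), by have := i.isLt; omega⟩ with
  | none => rfl
  | some x => cases x <;> rfl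

/-- A row is good if it contains no `β` and no `δ`. -/
def goodRow (n : ℕ) (T : Fin n → Fin n → Option SLetter) (i : Fin n) : Prop :=
  ∀ j : Fin n, T i j ≠ some SLetter.B ∧ T i j ≠ some SLetter.D

instance (n : ℕ) (T : Fin n → Fin n → Option SLetter) : DecidablePred (goodRow n T) :=
  fun i => by unfold goodRow; infer_instance

variable {R : Type*} [CommSemiring R]

def rowFac (z y : R) (n : ℕ) (T : Fin n → Fin n → Option SLetter) (i : Fin n) : R :=
  (if goodRow n T i then z else 1) * (if typeWord n T i = true then y else 1)

def Fwt (z y : R) (n : ℕ) (T : Fin n → Fin n → Option SLetter) : R :=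
  ∏ i : Fin n, rowFac z y n T i

def Vz (z y : R) (n : ℕ) : R := ∑ T : StaircaseTableau n, Fwt z y n T.val

def combine (m : ℕ) (T' : Fin m → Fin m → Option SLetter) (c : Fin (m+1) → Option SLetter)
    (i j : Fin (m+1)) : Option SLetter :=
  if _hj : (j : ℕ) = 0 then c i
  else if hi : (i : ℕ) < m then T' ⟨i, hi⟩ ⟨(j : ℕ) - 1, by have := j.isLt; omega⟩ else none

def restrictT (m : ℕ) (T : Fin (m+1) → Fin (m+1) → Option SLetter) (i j : Fin m) :
    Option SLetter :=
  T i.castSucc j.succ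

def Valid (m : ℕ) (T' : Fin m → Fin m → Option SLetter) (c : Fin (m+1) → Option SLetter) : Prop :=
  c (Fin.last m) ≠ none ∧
  (∀ i j : Fin m, (T' i j = some SLetter.B ∨ T' i j = some SLetter.D) → c i.castSucc = none) ∧
  (∀ i i' : Fin (m+1), i' < i → (c i = some SLetter.A ∨ c i = some SLetter.G) → c i' = none)

instance (m : ℕ) (T' : Fin m → Fin m → Option SLetter) : DecidablePred (Valid m T') :=
  fun c => by unfold Valid; infer_instance

def Wnl (z : R) (x : Option SLetter) (g : Bool) : R :=
  if x = some SLetter.B ∨ x = some SLetter.D then 1 else if g then z else 1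

def Wl (z y : R) : Option SLetter → R
  | none => z
  | some SLetter.A => z * y
  | some SLetter.G => z
  | some SLetter.B => 1
  | some SLetter.D => y

def CWt (z y : R) (m : ℕ) (g : Fin m → Bool) (c : Fin (m+1) → Option SLetter) : R :=
  (∏ i : Fin m, Wnl z (c i.castSucc) (g i)) * Wl z y (c (Fin.last m))

def VC (m : ℕ) (g : Fin m → Bool) (c : Fin (m+1) → Option SLetter) : Prop :=
  c (Fin.last m) ≠ none ∧
  (∀ i : Fin m, c i.castSucc ≠ none → g i = true) ∧
  (∀ i i' : Fin (m+1), i' < i → (c i = some SLetter.A ∨ c i = some SLetter.G) → c i' = none)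

def VT (m : ℕ) (g : Fin m → Bool) (c : Fin (m+1) → Option SLetter) : Prop :=
  VC m g c ∧ ∀ i : Fin (m+1), c i ≠ some SLetter.A ∧ c i ≠ some SLetter.G

instance (m : ℕ) (g : Fin m → Bool) : DecidablePred (VC m g) :=
  fun c => by unfold VC; infer_instance

instance (m : ℕ) (g : Fin m → Bool) : DecidablePred (VT m g) :=
  fun c => by unfold VT VC; infer_instance

lemma sum_pi_cons (m : ℕ) (f : (Fin (m+1) → Option SLetter) → R) :
    (∑ c : Fin (m+1) → Option SLetter, f c)
      = ∑ x : Option SLetter, ∑ c' : Fin m → Option SLetter, f (Fin.cons x c') := by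
  rw [← Equiv.sum_comp (Fin.consEquiv fun _ => Option SLetter) f, Fintype.sum_prod_type]
  rfl

lemma sum_sletter (f : SLetter → R) :
    (∑ x : SLetter, f x) = f SLetter.A + f SLetter.B + f SLetter.G + f SLetter.D := by
  have h : (Finset.univ : Finset SLetter) =
      {SLetter.A, SLetter.B, SLetter.G, SLetter.D} := by decide
  rw [h]
  simp [Finset.sum_insert, Finset.mem_insert]
  ring

lemma sum_option_sletter (f : Option SLetter → R) :
    (∑ x : Option SLetter, f x)
      = f none + (f (some SLetter.A) + f (some SLetter.B)
          + f (some SLetter.G) + f (some SLetter.D)) := by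
  rw [Fintype.sum_option, sum_sletter]

lemma VC_cons (m : ℕ) (g : Fin (m+1) → Bool) (x : Option SLetter)
    (c' : Fin (m+1) → Option SLetter) :
    VC (m+1) g (Fin.cons x c') ↔
      ((x = none ∧ VC m (fun i => g i.succ) c') ∨
        (x ≠ none ∧ g 0 = true ∧ VT m (fun i => g i.succ) c')) := by
  constructor
  · rintro ⟨h1, h2, h3⟩
    rw [← Fin.succ_last, Fin.cons_succ] at h1
    have hc2 : ∀ i : Fin m, c' i.castSucc ≠ none → g i.succ = true := by
      intro i hi
      apply h2 i.succ
      rwa [← Fin.succ_castSucc, Fin.cons_succ]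
    have hc3 : ∀ i i' : Fin (m+1), i' < i →
        (c' i = some SLetter.A ∨ c' i = some SLetter.G) → c' i' = none := by
      intro i i' hlt hAG
      have := h3 i.succ i'.succ (by simpa using hlt) (by rwa [Fin.cons_succ])
      rwa [Fin.cons_succ] at this
    by_cases hx : x = none
    · exact Or.inl ⟨hx, h1, hc2, hc3⟩
    · refine Or.inr ⟨hx, ?_, ⟨h1, hc2, hc3⟩, ?_⟩
      · apply h2 0
        rwa [Fin.castSucc_zero, Fin.cons_zero]
      · intro i
        constructor
        · intro hA
          exact hx (by
            have := h3 i.succ 0 (Fin.succ_pos i) (Or.inl (by rwa [Fin.cons_succ]))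
            rwa [Fin.cons_zero] at this)
        · intro hG
          exact hx (by
            have := h3 i.succ 0 (Fin.succ_pos i) (Or.inr (by rwa [Fin.cons_succ]))
            rwa [Fin.cons_zero] at this)
  · rintro (⟨hx, h1, h2, h3⟩ | ⟨hx, hg0, ⟨h1, h2, h3⟩, hAG⟩) <;>
      subst_vars <;> refine ⟨?_, ?_, ?_⟩
    · rwa [← Fin.succ_last, Fin.cons_succ]
    · intro i
      rcases Fin.eq_zero_or_eq_succ i with rfl | ⟨j, rfl⟩
      · rw [Fin.castSucc_zero, Fin.cons_zero]
        intro h; exact absurd rfl h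
      · rw [← Fin.succ_castSucc, Fin.cons_succ]
        exact h2 j
    · intro i i' hlt hAG'
      rcases Fin.eq_zero_or_eq_succ i with rfl | ⟨j, rfl⟩
      · exact absurd hlt (Fin.not_lt_zero i')
      · rcases Fin.eq_zero_or_eq_succ i' with rfl | ⟨j', rfl⟩
        · rw [Fin.cons_zero]
        · rw [Fin.cons_succ] at hAG' ⊢
          exact h3 j j' (by simpa using hlt) hAG'
    · rwa [← Fin.succ_last, Fin.cons_succ]
    · intro i
      rcases Fin.eq_zero_or_eq_succ i with rfl | ⟨j, rfl⟩
      · intro _; exact hg0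
      · rw [← Fin.succ_castSucc, Fin.cons_succ]
        exact h2 j
    · intro i i' hlt hAG'
      rcases Fin.eq_zero_or_eq_succ i with rfl | ⟨j, rfl⟩
      · exact absurd hlt (Fin.not_lt_zero i')
      · rw [Fin.cons_succ] at hAG'
        rcases hAG' with h | h
        · exact absurd h (hAG j).1
        · exact absurd h (hAG j).2

lemma VT_cons (m : ℕ) (g : Fin (m+1) → Bool) (x : Option SLetter)
    (c' : Fin (m+1) → Option SLetter) :
    VT (m+1) g (Fin.cons x c') ↔
      ((x = none ∨ ((x = some SLetter.B ∨ x = some SLetter.D) ∧ g 0 = true)) ∧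
        VT m (fun i => g i.succ) c') := by
  constructor
  · rintro ⟨hvc, hno⟩
    have hno0 := hno 0
    rw [Fin.cons_zero] at hno0
    have hno' : ∀ i : Fin (m+1), c' i ≠ some SLetter.A ∧ c' i ≠ some SLetter.G := by
      intro i
      have := hno i.succ
      rwa [Fin.cons_succ] at this
    rw [VC_cons] at hvc
    rcases hvc with ⟨hx, h⟩ | ⟨hx, hg0, hvt⟩
    · exact ⟨Or.inl hx, h, hno'⟩
    · refine ⟨Or.inr ⟨?_, hg0⟩, hvt⟩
      rcases x with _ | x
      · exact absurd rfl hx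
      · cases x
        · exact absurd rfl hno0.1
        · exact Or.inl rfl
        · exact absurd rfl hno0.2
        · exact Or.inr rfl
  · rintro ⟨hx, hvc', hno'⟩
    constructor
    · rw [VC_cons]
      rcases hx with rfl | ⟨hbd, hg0⟩
      · exact Or.inl ⟨rfl, hvc'⟩
      · refine Or.inr ⟨?_, hg0, hvc', hno'⟩
        rcases hbd with rfl | rfl <;> simp
    · intro i
      rcases Fin.eq_zero_or_eq_succ i with rfl | ⟨j, rfl⟩
      · rw [Fin.cons_zero]
        rcases hx with rfl | ⟨hbd, _⟩
        · simp
        · rcases hbd with rfl | rfl <;> simp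
      · rw [Fin.cons_succ]
        exact hno' j

lemma CWt_cons (z y : R) (m : ℕ) (g : Fin (m+1) → Bool) (x : Option SLetter)
    (c' : Fin (m+1) → Option SLetter) :
    CWt z y (m+1) g (Fin.cons x c') = Wnl z x (g 0) * CWt z y m (fun i => g i.succ) c' := by
  unfold CWt
  rw [Fin.prod_univ_succ]
  simp only [← Fin.succ_castSucc, Fin.cons_succ, Fin.castSucc_zero, Fin.cons_zero,
    ← Fin.succ_last]
  ring

lemma VC_zero (g : Fin 0 → Bool) (c : Fin 1 → Option SLetter) :
    VC 0 g c ↔ c 0 ≠ none := by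
  constructor
  · rintro ⟨h1, _, _⟩; exact h1
  · intro h
    refine ⟨h, fun i => i.elim0, ?_⟩
    intro i i' hlt _
    exact absurd hlt (by omega)

lemma VT_zero (g : Fin 0 → Bool) (c : Fin 1 → Option SLetter) :
    VT 0 g c ↔ (c 0 = some SLetter.B ∨ c 0 = some SLetter.D) := by
  constructor
  · rintro ⟨⟨h1, _, _⟩, hno⟩
    have h0 := hno 0
    rcases hc : c 0 with _ | x
    · exact absurd hc h1
    · rw [hc] at h0
      cases x
      · exact absurd rfl h0.1
      · exact Or.inl rfl
      · exact absurd rfl h0.2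
      · exact Or.inr rfl
  · intro h
    have h1 : c 0 ≠ none := by rcases h with h | h <;> simp [h]
    refine ⟨(VC_zero g c).mpr h1, ?_⟩
    intro i
    have : i = 0 := Fin.ext (by omega)
    subst this
    rcases h with h | h <;> simp [h]

lemma CWt_zero (z y : R) (g : Fin 0 → Bool) (c : Fin 1 → Option SLetter) :
    CWt z y 0 g c = Wl z y (c 0) := by
  unfold CWt
  simp

lemma sum_pi_one (f : (Fin 1 → Option SLetter) → R) :
    (∑ c : Fin 1 → Option SLetter, f c) = ∑ x : Option SLetter, f (fun _ => x) := by
  rw [← Equiv.sum_comp (Equiv.funUnique (Fin 1) (Option SLetter)).symm f]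
  rfl

lemma TS_eq (z y : R) : ∀ (m : ℕ) (g : Fin m → Bool),
    (∑ c : Fin (m+1) → Option SLetter, if VT m g c then CWt z y m g c else 0)
      = (1 + y) * ∏ i : Fin m, (if g i then z + 2 else 1) := by
  intro m
  induction m with
  | zero =>
    intro g
    rw [sum_pi_one]
    rw [sum_option_sletter]
    simp [VT_zero, CWt_zero, Wl]
  | succ m ih =>
    intro g
    rw [sum_pi_cons (m+1)]
    rw [sum_option_sletter]
    have hnone : (∑ c' : Fin (m+1) → Option SLetter,
        if VT (m+1) g (Fin.cons none c') then CWt z y (m+1) g (Fin.cons none c') else 0)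
        = Wnl z none (g 0) * ((1 + y) * ∏ i : Fin m, (if g i.succ then z + 2 else 1)) := by
      rw [← ih (fun i => g i.succ), Finset.mul_sum]
      refine Finset.sum_congr rfl fun c' _ => ?_
      rw [CWt_cons]
      by_cases h : VT m (fun i => g i.succ) c'
      · rw [if_pos ((VT_cons m g none c').mpr ⟨Or.inl rfl, h⟩), if_pos h]
      · rw [if_neg, if_neg h, mul_zero]
        intro hc
        exact h ((VT_cons m g none c').mp hc).2
    have hsome : ∀ l : SLetter, (∑ c' : Fin (m+1) → Option SLetter,
        if VT (m+1) g (Fin.cons (some l) c') then CWt z y (m+1) g (Fin.cons (some l) c') else 0)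
        = (if ((l = SLetter.B ∨ l = SLetter.D) ∧ g 0 = true) then Wnl z (some l) (g 0) else 0) *
            ((1 + y) * ∏ i : Fin m, (if g i.succ then z + 2 else 1)) := by
      intro l
      by_cases hl : ((l = SLetter.B ∨ l = SLetter.D) ∧ g 0 = true)
      · rw [if_pos hl, ← ih (fun i => g i.succ), Finset.mul_sum]
        refine Finset.sum_congr rfl fun c' _ => ?_
        rw [CWt_cons]
        by_cases h : VT m (fun i => g i.succ) c'
        · rw [if_pos, if_pos h]
          exact (VT_cons m g (some l) c').mpr
            ⟨Or.inr ⟨by rcases hl.1 with rfl | rfl; exacts [Or.inl rfl, Or.inr rfl], hl.2⟩, h⟩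
        · rw [if_neg, if_neg h, mul_zero]
          intro hc
          exact h ((VT_cons m g (some l) c').mp hc).2
      · rw [if_neg hl, zero_mul]
        refine Finset.sum_eq_zero fun c' _ => ?_
        rw [if_neg]
        intro hc
        rcases ((VT_cons m g (some l) c').mp hc).1 with h0 | ⟨hbd, hg0⟩
        · exact nomatch h0
        · refine hl ⟨?_, hg0⟩
          rcases hbd with h | h
          · exact Or.inl (Option.some.inj h)
          · exact Or.inr (Option.some.inj h)
    rw [hnone, hsome SLetter.A, hsome SLetter.B, hsome SLetter.G, hsome SLetter.D,
      Fin.prod_univ_succ]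
    by_cases hg : g 0 = true <;> simp [hg, Wnl] <;> ring

lemma CS_eq (z y : R) : ∀ (m : ℕ) (g : Fin m → Bool),
    (∑ c : Fin (m+1) → Option SLetter, if VC m g c then CWt z y m g c else 0)
      = (z + 1) * ((1 + y) * ∏ i : Fin m, (if g i then z + 2 else 1)) := by
  intro m
  induction m with
  | zero =>
    intro g
    rw [sum_pi_one]
    rw [sum_option_sletter]
    simp [VC_zero, CWt_zero, Wl]
    ring
  | succ m ih =>
    intro g
    rw [sum_pi_cons (m+1)]
    rw [sum_option_sletter]
    have hnone : (∑ c' : Fin (m+1) → Option SLetter,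
        if VC (m+1) g (Fin.cons none c') then CWt z y (m+1) g (Fin.cons none c') else 0)
        = Wnl z none (g 0) *
            ((z + 1) * ((1 + y) * ∏ i : Fin m, (if g i.succ then z + 2 else 1))) := by
      rw [← ih (fun i => g i.succ), Finset.mul_sum]
      refine Finset.sum_congr rfl fun c' _ => ?_
      rw [CWt_cons]
      by_cases h : VC m (fun i => g i.succ) c'
      · rw [if_pos ((VC_cons m g none c').mpr (Or.inl ⟨rfl, h⟩)), if_pos h]
      · rw [if_neg, if_neg h, mul_zero]
        intro hc
        rcases (VC_cons m g none c').mp hc with ⟨_, h'⟩ | ⟨hne, _, _⟩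
        · exact h h'
        · exact hne rfl
    have hsome : ∀ l : SLetter, (∑ c' : Fin (m+1) → Option SLetter,
        if VC (m+1) g (Fin.cons (some l) c') then CWt z y (m+1) g (Fin.cons (some l) c') else 0)
        = (if g 0 = true then Wnl z (some l) (g 0) else 0) *
            ((1 + y) * ∏ i : Fin m, (if g i.succ then z + 2 else 1)) := by
      intro l
      by_cases hg : g 0 = true
      · rw [if_pos hg, ← TS_eq z y m (fun i => g i.succ), Finset.mul_sum]
        refine Finset.sum_congr rfl fun c' _ => ?_
        rw [CWt_cons]
        by_cases h : VT m (fun i => g i.succ) c'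
        · rw [if_pos ((VC_cons m g (some l) c').mpr
            (Or.inr ⟨Option.some_ne_none l, hg, h⟩)), if_pos h]
        · rw [if_neg, if_neg h, mul_zero]
          intro hc
          rcases (VC_cons m g (some l) c').mp hc with ⟨h0, _⟩ | ⟨_, _, h'⟩
          · exact nomatch h0
          · exact h h'
      · rw [if_neg hg, zero_mul]
        refine Finset.sum_eq_zero fun c' _ => ?_
        rw [if_neg]
        intro hc
        rcases (VC_cons m g (some l) c').mp hc with ⟨h0, _⟩ | ⟨_, hg0, _⟩
        · exact nomatch h0
        · exact hg hg0
    rw [hnone, hsome SLetter.A, hsome SLetter.B, hsome SLetter.G, hsome SLetter.D,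
      Fin.prod_univ_succ]
    by_cases hg : g 0 = true <;> simp [hg, Wnl] <;> ring
lemma combine_row_zero (m : ℕ) (T' : Fin m → Fin m → Option SLetter)
    (c : Fin (m+1) → Option SLetter) (i : Fin (m+1)) :
    combine m T' c i 0 = c i := by
  unfold combine
  rw [dif_pos (by simp : (((0 : Fin (m+1))) : ℕ) = 0)]

lemma combine_castSucc_succ (m : ℕ) (T' : Fin m → Fin m → Option SLetter)
    (c : Fin (m+1) → Option SLetter) (i j : Fin m) :
    combine m T' c i.castSucc j.succ = T' i j := by
  unfold combine
  rw [dif_neg (by simp), dif_pos (by simpa using i.isLt)]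
  simp

lemma combine_last_succ (m : ℕ) (T' : Fin m → Fin m → Option SLetter)
    (c : Fin (m+1) → Option SLetter) (j : Fin m) :
    combine m T' c (Fin.last m) j.succ = none := by
  unfold combine
  rw [dif_neg (by simp), dif_neg (by simp)]

lemma restrictT_combine (m : ℕ) (T' : Fin m → Fin m → Option SLetter)
    (c : Fin (m+1) → Option SLetter) :
    restrictT m (combine m T' c) = T' := by
  funext i j
  unfold restrictT
  exact combine_castSucc_succ m T' c i j

lemma col_combine (m : ℕ) (T' : Fin m → Fin m → Option SLetter)
    (c : Fin (m+1) → Option SLetter) :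
    (fun i => combine m T' c i 0) = c := by
  funext i
  exact combine_row_zero m T' c i

lemma combine_restrictT (m : ℕ) (T : Fin (m+1) → Fin (m+1) → Option SLetter)
    (hT : IsStaircase (m+1) T) :
    combine m (restrictT m T) (fun i => T i 0) = T := by
  funext i j
  unfold combine restrictT
  by_cases hj : (j : ℕ) = 0
  · rw [dif_pos hj]
    have : j = 0 := Fin.ext hj
    rw [this]
  · rw [dif_neg hj]
    by_cases hi : (i : ℕ) < m
    · rw [dif_pos hi]
      have e1 : ((⟨(i : ℕ), hi⟩ : Fin m)).castSucc = i := Fin.ext (by simp)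
      have e2 : ((⟨(j : ℕ) - 1, by have := j.isLt; omega⟩ : Fin m)).succ = j :=
        Fin.ext (by simp; omega)
      rw [e1, e2]
    · rw [dif_neg hi]
      have hij : m + 1 ≤ (i : ℕ) + (j : ℕ) := by omega
      exact (hT.1 i j hij).symm

lemma isStaircase_restrictT (m : ℕ) (T : Fin (m+1) → Fin (m+1) → Option SLetter)
    (hT : IsStaircase (m+1) T) : IsStaircase m (restrictT m T) := by
  obtain ⟨h1, h2, h3, h4⟩ := hT
  refine ⟨?_, ?_, ?_, ?_⟩
  · intro i j h
    exact h1 i.castSucc j.succ (by simp; omega)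
  · intro i j h
    exact h2 i.castSucc j.succ (by simp; omega)
  · intro i j j' hlt hBD
    exact h3 i.castSucc j.succ j'.succ (by simpa using hlt) hBD
  · intro i i' j hlt hAG
    exact h4 i.castSucc i'.castSucc j.succ (by simpa using hlt) hAG

lemma valid_restrictT (m : ℕ) (T : Fin (m+1) → Fin (m+1) → Option SLetter)
    (hT : IsStaircase (m+1) T) : Valid m (restrictT m T) (fun i => T i 0) := by
  obtain ⟨h1, h2, h3, h4⟩ := hT
  refine ⟨?_, ?_, ?_⟩
  · exact h2 (Fin.last m) 0 (by simp)
  · intro i j hBD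
    exact h3 i.castSucc j.succ 0 (Fin.succ_pos j) hBD
  · intro i i' hlt hAG
    exact h4 i i' 0 hlt hAG

lemma isStaircase_combine (m : ℕ) (T' : Fin m → Fin m → Option SLetter)
    (c : Fin (m+1) → Option SLetter) (hT' : IsStaircase m T') (hc : Valid m T' c) :
    IsStaircase (m+1) (combine m T' c) := by
  obtain ⟨h1, h2, h3, h4⟩ := hT'
  obtain ⟨v1, v2, v3⟩ := hc
  refine ⟨?_, ?_, ?_, ?_⟩
  · intro i j h
    have hj : (j : ℕ) ≠ 0 := by have := i.isLt; omega
    by_cases hi : (i : ℕ) < m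
    · unfold combine
      rw [dif_neg hj, dif_pos hi]
      exact h1 _ _ (by simp; omega)
    · unfold combine
      rw [dif_neg hj, dif_neg hi]
  · intro i j h
    by_cases hj : (j : ℕ) = 0
    · unfold combine
      rw [dif_pos hj]
      have : i = Fin.last m := Fin.ext (by simp [Fin.val_last]; omega)
      rw [this]
      exact v1
    · have hi : (i : ℕ) < m := by have := j.isLt; omega
      unfold combine
      rw [dif_neg hj, dif_pos hi]
      exact h2 _ _ (by simp; omega)
  · intro i j j' hlt hBD
    have hlt' : (j' : ℕ) < (j : ℕ) := hlt
    have hj : (j : ℕ) ≠ 0 := by omega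
    have hi : (i : ℕ) < m := by
      by_contra hi
      unfold combine at hBD
      rw [dif_neg hj, dif_neg hi] at hBD
      rcases hBD with h | h <;> exact nomatch h
    unfold combine at hBD ⊢
    rw [dif_neg hj, dif_pos hi] at hBD
    by_cases hj' : (j' : ℕ) = 0
    · rw [dif_pos hj']
      have hv := v2 ⟨(i : ℕ), hi⟩ _ hBD
      have hcast : ((⟨(i : ℕ), hi⟩ : Fin m).castSucc) = i := Fin.ext (by simp)
      rwa [hcast] at hv
    · rw [dif_neg hj', dif_pos hi]
      exact h3 _ _ _ (Fin.mk_lt_mk.mpr (by omega)) hBD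
  · intro i i' j hlt hAG
    have hlt' : (i' : ℕ) < (i : ℕ) := hlt
    by_cases hj : (j : ℕ) = 0
    · unfold combine at hAG ⊢
      rw [dif_pos hj] at hAG
      rw [dif_pos hj]
      exact v3 i i' hlt hAG
    · have hi : (i : ℕ) < m := by
        by_contra hi
        unfold combine at hAG
        rw [dif_neg hj, dif_neg hi] at hAG
        rcases hAG with h | h <;> exact nomatch h
      have hi' : (i' : ℕ) < m := by omega
      unfold combine at hAG ⊢
      rw [dif_neg hj, dif_pos hi] at hAG
      rw [dif_neg hj, dif_pos hi']
      exact h4 _ _ _ (Fin.mk_lt_mk.mpr (by omega)) hAG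

lemma typeWord_combine_castSucc (m : ℕ) (T' : Fin m → Fin m → Option SLetter)
    (c : Fin (m+1) → Option SLetter) (i : Fin m) :
    typeWord (m+1) (combine m T' c) i.castSucc = typeWord m T' i := by
  have hi := i.isLt
  rw [typeWord_def, typeWord_def]
  rw [show (⟨m + 1 - 1 - ((i.castSucc : Fin (m+1)) : ℕ), by omega⟩ : Fin (m+1))
      = (⟨m - 1 - (i : ℕ), by omega⟩ : Fin m).succ from Fin.ext (by simp; omega)]
  rw [combine_castSucc_succ m T' c i ⟨m - 1 - (i : ℕ), by omega⟩]

lemma typeWord_combine_last (m : ℕ) (T' : Fin m → Fin m → Option SLetter)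
    (c : Fin (m+1) → Option SLetter) :
    typeWord (m+1) (combine m T' c) (Fin.last m) = typeBool (c (Fin.last m)) := by
  rw [typeWord_def]
  rw [show (⟨m + 1 - 1 - ((Fin.last m : Fin (m+1)) : ℕ), by omega⟩ : Fin (m+1)) = 0 from
    Fin.ext (by simp)]
  rw [combine_row_zero]

lemma goodRow_combine_castSucc (m : ℕ) (T' : Fin m → Fin m → Option SLetter)
    (c : Fin (m+1) → Option SLetter) (i : Fin m) :
    goodRow (m+1) (combine m T' c) i.castSucc ↔
      ((c i.castSucc ≠ some SLetter.B ∧ c i.castSucc ≠ some SLetter.D) ∧ goodRow m T' i) := by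
  constructor
  · intro h
    refine ⟨?_, ?_⟩
    · have h0 := h 0
      rwa [combine_row_zero] at h0
    · intro j
      have hj := h j.succ
      rwa [combine_castSucc_succ] at hj
  · rintro ⟨h0, h⟩ j
    rcases Fin.eq_zero_or_eq_succ j with rfl | ⟨j', rfl⟩
    · rwa [combine_row_zero]
    · rw [combine_castSucc_succ]
      exact h j'

lemma goodRow_combine_last (m : ℕ) (T' : Fin m → Fin m → Option SLetter)
    (c : Fin (m+1) → Option SLetter) :
    goodRow (m+1) (combine m T' c) (Fin.last m) ↔
      (c (Fin.last m) ≠ some SLetter.B ∧ c (Fin.last m) ≠ some SLetter.D) := by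
  constructor
  · intro h
    have h0 := h 0
    rwa [combine_row_zero] at h0
  · intro h0 j
    rcases Fin.eq_zero_or_eq_succ j with rfl | ⟨j', rfl⟩
    · rwa [combine_row_zero]
    · rw [combine_last_succ]
      simp

lemma Fwt_combine (z y : R) (m : ℕ) (T' : Fin m → Fin m → Option SLetter)
    (c : Fin (m+1) → Option SLetter) :
    Fwt z y (m+1) (combine m T' c)
      = (∏ i : Fin m, (if typeWord m T' i = true then y else 1)) *
          CWt z y m (fun i => decide (goodRow m T' i)) c := by
  have hlast : rowFac z y (m+1) (combine m T' c) (Fin.last m) = Wl z y (c (Fin.last m)) := by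
    unfold rowFac
    rcases hc : c (Fin.last m) with _ | l
    · simp [typeWord_combine_last, goodRow_combine_last, hc, typeBool, Wl]
    · cases l <;>
        simp [typeWord_combine_last, goodRow_combine_last, hc, typeBool, Wl]
  have hstep : ∀ i : Fin m, rowFac z y (m+1) (combine m T' c) i.castSucc
      = Wnl z (c i.castSucc) (decide (goodRow m T' i)) *
          (if typeWord m T' i = true then y else 1) := by
    intro i
    unfold rowFac
    rw [typeWord_combine_castSucc]
    congr 1
    rcases hc : c i.castSucc with _ | l
    · by_cases hg : goodRow m T' i <;>
        simp [Wnl, hg, goodRow_combine_castSucc, hc]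
    · cases l <;> by_cases hg : goodRow m T' i <;>
        simp [Wnl, hg, goodRow_combine_castSucc, hc]
  unfold Fwt CWt
  rw [Fin.prod_univ_castSucc, hlast]
  simp only [hstep]
  rw [Finset.prod_mul_distrib]
  ring

lemma valid_iff_VC (m : ℕ) (T' : Fin m → Fin m → Option SLetter)
    (c : Fin (m+1) → Option SLetter) :
    Valid m T' c ↔ VC m (fun i => decide (goodRow m T' i)) c := by
  unfold Valid VC
  refine and_congr Iff.rfl (and_congr ?_ Iff.rfl)
  constructor
  · intro h i hne
    rw [decide_eq_true_eq]
    intro j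
    constructor
    · intro hbd
      exact hne (h i j (Or.inl hbd))
    · intro hbd
      exact hne (h i j (Or.inr hbd))
  · intro h i j hbd
    by_contra hne
    have hg := h i hne
    rw [decide_eq_true_eq] at hg
    rcases hbd with hb | hd
    · exact (hg j).1 hb
    · exact (hg j).2 hd

lemma sum_staircase_succ (m : ℕ) (F : (Fin (m+1) → Fin (m+1) → Option SLetter) → R) :
    (∑ T : StaircaseTableau (m+1), F T.val)
      = ∑ T' : StaircaseTableau m, ∑ c : Fin (m+1) → Option SLetter,
          (if Valid m T'.val c then F (combine m T'.val c) else 0) := by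
  have e1 : ∀ x, x ∈ Finset.univ.filter (IsStaircase (m+1)) ↔ IsStaircase (m+1) x := by
    intro x; simp
  have e2 : ∀ x, x ∈ Finset.univ.filter (IsStaircase m) ↔ IsStaircase m x := by
    intro x; simp
  have key : (∑ T ∈ Finset.univ.filter (IsStaircase (m+1)), F T)
      = ∑ p ∈ Finset.univ.filter
          (fun p : (Fin m → Fin m → Option SLetter) × (Fin (m+1) → Option SLetter) =>
            IsStaircase m p.1 ∧ Valid m p.1 p.2), F (combine m p.1 p.2) := by
    refine Finset.sum_bij' (fun T _ => (restrictT m T, fun i => T i 0))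
      (fun p _ => combine m p.1 p.2) ?_ ?_ ?_ ?_ ?_
    · intro T hT
      rw [Finset.mem_filter] at hT ⊢
      exact ⟨Finset.mem_univ _, isStaircase_restrictT m T hT.2, valid_restrictT m T hT.2⟩
    · intro p hp
      rw [Finset.mem_filter] at hp ⊢
      exact ⟨Finset.mem_univ _, isStaircase_combine m p.1 p.2 hp.2.1 hp.2.2⟩
    · intro T hT
      rw [Finset.mem_filter] at hT
      exact combine_restrictT m T hT.2
    · intro p hp
      exact Prod.ext (restrictT_combine m p.1 p.2) (col_combine m p.1 p.2)
    · intro T hT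
      rw [Finset.mem_filter] at hT
      rw [combine_restrictT m T hT.2]
  have l1 : (∑ T : StaircaseTableau (m+1), F T.val)
      = ∑ T ∈ Finset.univ.filter (IsStaircase (m+1)), F T :=
    (Finset.sum_subtype _ e1 F).symm
  rw [l1, key, Finset.sum_filter, Fintype.sum_prod_type]
  have hsplit : ∀ a : Fin m → Fin m → Option SLetter,
      (∑ b : Fin (m+1) → Option SLetter,
        if IsStaircase m a ∧ Valid m a b then F (combine m a b) else 0)
      = if IsStaircase m a
          then (∑ b : Fin (m+1) → Option SLetter,
            if Valid m a b then F (combine m a b) else 0) else 0 := by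
    intro a
    by_cases h : IsStaircase m a <;> simp [h]
  simp only [hsplit]
  rw [← Finset.sum_filter]
  exact Finset.sum_subtype _ e2 _

lemma Vz_succ (z y : R) (m : ℕ) :
    Vz z y (m+1) = (z + 1) * (1 + y) * Vz (z + 2) y m := by
  unfold Vz
  rw [sum_staircase_succ m (Fwt z y (m+1))]
  have hT : ∀ T' : StaircaseTableau m,
      (∑ c : Fin (m+1) → Option SLetter,
        if Valid m T'.val c then Fwt z y (m+1) (combine m T'.val c) else 0)
      = (z + 1) * (1 + y) * Fwt (z + 2) y m T'.val := by
    intro T'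
    have h1 : ∀ c : Fin (m+1) → Option SLetter,
        (if Valid m T'.val c then Fwt z y (m+1) (combine m T'.val c) else 0)
        = (∏ i : Fin m, (if typeWord m T'.val i = true then y else 1)) *
            (if VC m (fun i => decide (goodRow m T'.val i)) c
              then CWt z y m (fun i => decide (goodRow m T'.val i)) c else 0) := by
      intro c
      by_cases h : Valid m T'.val c
      · rw [if_pos h, if_pos ((valid_iff_VC m T'.val c).mp h), Fwt_combine]
      · rw [if_neg h, if_neg (fun hv => h ((valid_iff_VC m T'.val c).mpr hv)), mul_zero]
    simp only [h1]
    rw [← Finset.mul_sum, CS_eq]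
    unfold Fwt rowFac
    rw [Finset.prod_mul_distrib]
    simp only [decide_eq_true_eq]
    ring
  simp only [hT]
  rw [← Finset.mul_sum]

lemma Vz_zero (z y : R) : Vz z y 0 = 1 := by
  letI : Unique (StaircaseTableau 0) :=
    { default := ⟨fun i _ => none, by
        refine ⟨?_, ?_, ?_, ?_⟩ <;> intro i <;> exact i.elim0⟩
      uniq := by
        intro T
        apply Subtype.ext
        funext i
        exact i.elim0 }
  unfold Vz
  rw [Fintype.sum_unique]
  unfold Fwt
  simp

lemma Vz_closed (y : R) : ∀ n k : ℕ, Vz ((2 * k + 1 : ℕ) : R) y n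
    = (1 + y) ^ n * ∏ j ∈ Finset.range n, ((2 * (k + j) + 2 : ℕ) : R) := by
  intro n
  induction n with
  | zero =>
    intro k
    simp [Vz_zero]
  | succ n ih =>
    intro k
    have h2 : ((2 * k + 1 : ℕ) : R) + 2 = ((2 * (k + 1) + 1 : ℕ) : R) := by
      push_cast; ring
    have hprod : (∏ j ∈ Finset.range n, ((2 * ((k+1) + j) + 2 : ℕ) : R))
        = ∏ j ∈ Finset.range n, ((2 * (k + (j+1)) + 2 : ℕ) : R) :=
      Finset.prod_congr rfl fun j _ => by congr 1; omega
    rw [Vz_succ, h2, ih (k+1), hprod, Finset.prod_range_succ']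
    push_cast
    ring

lemma prod_even (n : ℕ) : (∏ j ∈ Finset.range n, (2 * (0 + j) + 2)) = 2 ^ n * n.factorial := by
  induction n with
  | zero => simp
  | succ n ih =>
    rw [Finset.prod_range_succ, ih, Nat.factorial_succ]
    ring

end SPAux


open Polynomial in
/-- For every positive integer `n`, the fugacity partition function of staircase tableaux
at `α = β = γ = δ = 1` and `q = 1` equals `Z_n(y; 1,1,1,1; 1) = 2^n (y+1)^n n!` in `ℤ[y]`. -/
theorem staircase_partition_all_one (n : ℕ) (hn : 1 ≤ n) :
    stZ (Polynomial ℤ) n X 1 1 1 1 1 =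
      2 ^ n * (X + 1) ^ n * (n.factorial : Polynomial ℤ) := by
  have h1 : stZ (Polynomial ℤ) n X 1 1 1 1 1 = Vz (1 : Polynomial ℤ) X n := by
    unfold stZ Vz
    refine Finset.sum_congr rfl fun T _ => ?_
    have hw : stWt n (1 : Polynomial ℤ) 1 1 1 1 T.val = 1 := by simp [stWt]
    rw [hw, one_mul]
    unfold Fwt rowFac bulletCount
    simp only [ite_self, one_mul]
    rw [← Finset.prod_filter, Finset.prod_const]
  have h2 := Vz_closed (X : Polynomial ℤ) n 0
  rw [h1, show (1 : Polynomial ℤ) = ((2 * 0 + 1 : ℕ) : Polynomial ℤ) by norm_num, h2,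
    ← Nat.cast_prod, prod_even]
  push_cast
  ring
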